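/- Let F ∈ ℤ[[t]] be the formal power series F(t) = (∏_{n=1}^{∞}(1 − tⁿ)³ + 3t·∏_{n=1}^{∞}(1 − t^{9n})³) · (∏_{n=1}^{∞}(1 − t^{3n})⁹)^{-1}. Then the coefficient of t^k in F is zero for every k not divisible by 3. (This is the formal-series form of the statement that f₂(τ) = η(τ/3)³η(τ)^{−9} + 3η(3τ)³η(τ)^{−9} has a q-expansion q^{−1/3}(1 + 14q + 92q² + …) in integer powers of q.) -/

import Mathlib

open PowerSeries Finset

def T (i : ℕ) : ℕ := i*(i+1)/2

lemma Tdouble (i : ℕ) : 2 * T i = i*(i+1) := by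
  unfold T; obtain ⟨c, hc⟩ := Nat.even_mul_succ_self i; omega

lemma T_succ (i : ℕ) : T (i+1) = T i + (i+1) := by
  have h1 := Tdouble i; have h2 := Tdouble (i+1); nlinarith

lemma T_ge (i : ℕ) : i ≤ T i := by have := Tdouble i; nlinarith

lemma T_strictMono : StrictMono T := strictMono_nat_of_lt_succ (fun n => by rw [T_succ]; omega)

lemma T_inj {i j : ℕ} (h : T i = T j) : i = j := T_strictMono.injective h

lemma T_3s (s : ℕ) : T (3*s) = 3 * (T s + s*s) := by
  have h1 := Tdouble (3*s); have h2 := Tdouble s; nlinarith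

lemma T_3s2 (s : ℕ) : T (3*s+2) = 3 * (T s + (s+1)*(s+1)) := by
  have h1 := Tdouble (3*s+2); have h2 := Tdouble s; nlinarith

lemma T_3s1 (s : ℕ) : T (3*s+1) = 9 * T s + 1 := by
  have h1 := Tdouble (3*s+1); have h2 := Tdouble s; nlinarith

section QB
variable {R : Type*} [CommRing R]

/-- Gaussian binomial coefficients, defined by the q-Pascal recurrence. -/
def qb (q : R) : ℕ → ℕ → R
  | 0, 0 => 1
  | 0, _+1 => 0
  | M+1, 0 => qb q M 0
  | M+1, j+1 => qb q M (j+1) + q^(M - j) * qb q M j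

variable (q : R)

@[simp] lemma qb_zero_right : ∀ M, qb q M 0 = 1
  | 0 => rfl
  | M+1 => by rw [qb]; exact qb_zero_right M

lemma qb_eq_zero : ∀ M j, M < j → qb q M j = 0
  | 0, j+1, _ => rfl
  | M+1, j+1, h => by
      rw [qb, qb_eq_zero M (j+1) (by omega), qb_eq_zero M j (by omega)]; ring

@[simp] lemma qb_self : ∀ M, qb q M M = 1
  | 0 => rfl
  | M+1 => by rw [qb, qb_eq_zero q M (M+1) (by omega), qb_self M]; simp

/-- Gauss's q-binomial theorem (homogeneous form). -/
lemma gauss (u v : R) : ∀ M : ℕ,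
    ∏ m ∈ range M, (u + v * q^m)
      = ∑ j ∈ range (M+1), qb q M j * q^(T (j-1)) * v^j * u^(M-j)
  | 0 => by simp [T]
  | M+1 => by
    rw [prod_range_succ, gauss u v M, sum_mul]
    have expand : ∀ j ∈ range (M+1),
        qb q M j * q^(T (j-1)) * v^j * u^(M-j) * (u + v * q^M)
          = qb q M j * q^(T (j-1)) * v^j * u^(M+1-j)
            + (qb q M j * q^(T (j-1) + M)) * v^(j+1) * u^(M-j) := by
      intro j hj
      rw [mem_range] at hj
      have h1 : u^(M+1-j) = u^(M-j) * u := by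
        rw [← pow_succ]; congr 1; omega
      have h2 : q^(T (j-1) + M) = q^(T (j-1)) * q^M := pow_add q _ _
      rw [h1, h2]; ring
    rw [sum_congr rfl expand, sum_add_distrib]
    -- second sum: reindex
    have reidx : ∑ j ∈ range (M+1), (qb q M j * q^(T (j-1) + M)) * v^(j+1) * u^(M-j)
        = ∑ j ∈ range (M+2), (if j = 0 then 0 else qb q M (j-1) * q^(T (j-1-1) + M)) * v^j * u^(M+1-j) := by
      rw [Finset.sum_range_succ' (fun j => (if j = 0 then 0 else qb q M (j-1) * q^(T (j-1-1) + M)) * v^j * u^(M+1-j))]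
      simp only [if_neg (Nat.succ_ne_zero _), if_pos rfl, Nat.add_sub_cancel,
        zero_mul, mul_zero, add_zero, if_true]
      apply sum_congr rfl
      intro j hj; rw [mem_range] at hj
      have : M + 1 - (j+1) = M - j := by omega
      rw [this]
    rw [reidx]
    -- first sum: extend to range (M+2)
    have ext1 : ∑ j ∈ range (M+2), qb q M j * q^(T (j-1)) * v^j * u^(M+1-j)
        = ∑ j ∈ range (M+1), qb q M j * q^(T (j-1)) * v^j * u^(M+1-j) := by
      rw [Finset.sum_range_succ, qb_eq_zero q M (M+1) (by omega)]; simp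
    rw [← ext1, ← sum_add_distrib]
    apply sum_congr rfl
    intro j hj; rw [mem_range] at hj
    rcases Nat.eq_zero_or_eq_succ_pred j with hj0 | hj1
    · subst hj0; simp
    · obtain ⟨j', rfl⟩ : ∃ j', j = j' + 1 := ⟨j - 1, hj1⟩
      simp only [if_neg (Nat.succ_ne_zero _), Nat.add_sub_cancel]
      rw [show qb q (M+1) (j'+1) = qb q M (j'+1) + q^(M - j') * qb q M j' from rfl]
      have hE : T (j'-1) + M = (M - j') + T j' := by
        rcases Nat.eq_zero_or_eq_succ_pred j' with h0 | h1
        · subst h0; simp [T]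
        · obtain ⟨k, rfl⟩ : ∃ k, j' = k + 1 := ⟨j' - 1, h1⟩
          simp only [Nat.add_sub_cancel]
          rw [T_succ]; omega
      rw [hE, pow_add]; ring

end QB
section QB2
variable {R : Type*} [CommRing R] (q : R)

/-- `qb M j * ∏_{i<M-j} (1-q^{i+1}) = ∏_{i<M-j} (1-q^{j+1+i})` for `j ≤ M`. -/
lemma qbmul : ∀ M j, j ≤ M →
    qb q M j * ∏ i ∈ range (M-j), (1 - q^(i+1))
      = ∏ i ∈ range (M-j), (1 - q^(j+1+i))
  | 0, 0, _ => by simp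
  | M+1, j, hj => by
    rcases Nat.eq_or_lt_of_le hj with h | h
    · subst h; simp
    · have hjM : j ≤ M := by omega
      rcases Nat.eq_zero_or_eq_succ_pred j with h0 | h1
      · subst h0
        rw [qb_zero_right]
        simp only [Nat.sub_zero, one_mul, zero_add]
        exact prod_congr rfl fun i _ => by rw [add_comm]
      · obtain ⟨j', rfl⟩ : ∃ j', j = j' + 1 := ⟨j - 1, h1⟩
        have hj'M : j' + 1 ≤ M := by omega
        rw [show qb q (M+1) (j'+1) = qb q M (j'+1) + q^(M - j') * qb q M j' from rfl]
        have hMj : M + 1 - (j'+1) = (M - (j'+1)) + 1 := by omega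
        rw [hMj, add_mul, prod_range_succ]
        have p1 : qb q M (j'+1) * (∏ i ∈ range (M-(j'+1)), (1 - q^(i+1)))
            = ∏ i ∈ range (M-(j'+1)), (1 - q^(j'+2+i)) := qbmul M (j'+1) hj'M
        have p2 : qb q M j' * ∏ i ∈ range (M-j'), (1 - q^(i+1))
            = ∏ i ∈ range (M-j'), (1 - q^(j'+1+i)) := qbmul M j' (by omega)
        have hMj' : M - j' = (M - (j'+1)) + 1 := by omega
        have p2' : qb q M j' * ((∏ i ∈ range (M-(j'+1)), (1 - q^(i+1))) * (1 - q^(M-(j'+1)+1)))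
            = (1 - q^(j'+1)) * ∏ i ∈ range (M-(j'+1)), (1 - q^(j'+2+i)) := by
          rw [← prod_range_succ, ← hMj', p2, hMj', prod_range_succ', mul_comm]
          exact congrArg₂ _ (by norm_num)
            (prod_congr rfl fun i _ => by rw [show j'+1+(i+1) = j'+2+i from by omega])
        rw [mul_assoc (q^(M-j')) (qb q M j') _, p2', ← mul_assoc (qb q M (j'+1)), p1]
        have e1 : M - (j'+1) + 1 = M - j' := by omega
        rw [e1]
        have hq : q^(M-j') * q^(j'+1) = q^(M+1) := by rw [← pow_add]; congr 1; omega
        have e3 : ∏ i ∈ range (M-j'), (1 - q^(j'+1+1+i))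
            = (∏ i ∈ range (M-(j'+1)), (1 - q^(j'+2+i))) * (1 - q^(M+1)) := by
          rw [← e1, prod_range_succ]
          congr 2
          congr 1
          omega
        rw [e3]
        linear_combination (-(∏ i ∈ range (M-(j'+1)), (1 - q^(j'+2+i)))) * hq

/-- products of `1 - q^e` with all `e ≥ c` are `1 + q^c * w`. -/
lemma prod_one_sub_pow_congr {ι : Type*} (S : Finset ι) (f : ι → ℕ) (c : ℕ)
    (h : ∀ m ∈ S, c ≤ f m) :
    ∃ w : R, ∏ m ∈ S, (1 - q^(f m)) = 1 + q^c * w := by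
  classical
  induction S using Finset.induction_on with
  | empty => exact ⟨0, by simp⟩
  | @insert a s ha ih =>
    obtain ⟨w, hw⟩ := ih (fun m hm => h m (mem_insert_of_mem hm))
    have hc : c ≤ f a := h a (mem_insert_self a s)
    obtain ⟨d, hd⟩ : ∃ d, f a = c + d := ⟨f a - c, by omega⟩
    refine ⟨w - q^d * (1 + q^c * w), ?_⟩
    rw [prod_insert ha, hw, hd, pow_add]
    ring

end QB2
section QB3
variable {R : Type*} [CommRing R] (q : R)

lemma qb_one : ∀ M, qb q M 1 = ∑ i ∈ range M, q^i
  | 0 => by simp [qb]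
  | M+1 => by
    rw [show qb q (M+1) 1 = qb q M 1 + q^(M-0) * qb q M 0 from rfl,
      qb_one M, qb_zero_right, sum_range_succ]
    simp

lemma qb_pascal2 : ∀ M j, qb q (M+1) (j+1) = q^(j+1) * qb q M (j+1) + qb q M j
  | 0, j => by
    rcases j with _ | j
    · simp [qb]
    · rw [qb_eq_zero q 1 (j+2) (by omega), qb_eq_zero q 0 (j+2) (by omega),
        qb_eq_zero q 0 (j+1) (by omega)]
      ring
  | M+1, j => by
    rcases Nat.lt_or_ge (M+2) (j+1) with h | h
    · rw [qb_eq_zero q (M+2) (j+1) (by omega), qb_eq_zero q (M+1) (j+1) (by omega),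
        qb_eq_zero q (M+1) j (by omega)]
      ring
    rcases Nat.eq_or_lt_of_le h with h1 | h1
    · have hj : j = M + 1 := by omega
      subst hj
      rw [show (M+1+1 : ℕ) = (M+2 : ℕ) from rfl, qb_self, qb_eq_zero q (M+1) (M+2) (by omega), qb_self]
      ring
    · have hjM : j ≤ M := by omega
      rcases Nat.eq_zero_or_eq_succ_pred j with h0 | hsucc
      · subst h0
        rw [show qb q (M+2) (0+1) = qb q (M+1) (0+1) + q^(M+1-0) * qb q (M+1) 0 from rfl]
        rw [qb_one, qb_zero_right, Nat.sub_zero, mul_one]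
        have l1 : (∑ i ∈ range (M+2), q^i) = q^(M+1) + ∑ i ∈ range (M+1), q^i := geom_sum_succ'
        have l2 : (∑ i ∈ range (M+2), q^i) = q * ∑ i ∈ range (M+1), q^i + 1 := geom_sum_succ
        linear_combination l2 - l1
      · obtain ⟨k, rfl⟩ : ∃ k, j = k + 1 := ⟨j - 1, hsucc⟩
        have hB2 : qb q (M+1) (k+1+1) = qb q M (k+1+1) + q^(M-(k+1)) * qb q M (k+1) := rfl
        have hB1 : qb q (M+1) (k+1) = qb q M (k+1) + q^(M-k) * qb q M k := rfl
        have iB2 := qb_pascal2 M (k+1)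
        have iB1 := qb_pascal2 M k
        rw [show qb q (M+2) (k+1+1) = qb q (M+1) (k+1+1) + q^((M+1)-(k+1)) * qb q (M+1) (k+1) from rfl]
        rw [show (M+1)-(k+1) = M-k from by omega]
        conv_lhs => rw [iB2, iB1]
        conv_rhs => rw [hB2, hB1]
        have e1 : q^(M-k) * q^(k+1) = q^(M+1) := by rw [← pow_add]; congr 1; omega
        have e2 : q^(k+1+1) * q^(M-(k+1)) = q^(M+1) := by rw [← pow_add]; congr 1; omega
        linear_combination (qb q M (k+1)) * e1 - (qb q M (k+1)) * e2

lemma qb_symm : ∀ M j, j ≤ M → qb q M j = qb q M (M-j)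
  | 0, 0, _ => rfl
  | M+1, 0, _ => by rw [qb_zero_right, Nat.sub_zero, qb_self]
  | M+1, j+1, hj => by
    rcases Nat.eq_or_lt_of_le hj with h1 | h1
    · rw [← h1, qb_self, Nat.sub_self, qb_zero_right]
    · have hk : j + 1 ≤ M := by omega
      rw [show qb q (M+1) (j+1) = qb q M (j+1) + q^(M-j) * qb q M j from rfl]
      rw [qb_symm M (j+1) hk, qb_symm M j (by omega)]
      have e : M + 1 - (j+1) = (M - (j+1)) + 1 := by omega
      rw [e, qb_pascal2 q M (M-(j+1))]
      have e2 : M - (j+1) + 1 = M - j := by omega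
      rw [e2]
      ring

end QB3
section KEY
variable {R : Type*} [CommRing R]

lemma two_cancel {a b : ℕ} (h : 2*a = 2*b) : a = b := by omega

lemma E1 (i d : ℕ) : T (2*i+d) + (i+d)*d = (T (i+d) + (i+d)*(i+d)) + T i := by
  apply two_cancel
  simp only [Nat.mul_add]
  rw [Tdouble, Tdouble, Tdouble]
  ring

lemma E2 (i e : ℕ) : T e + (i+e+1)*((i+e+1)+1+i) = (T (i+e+1) + (i+e+1)*(i+e+1)) + T i := by
  apply two_cancel
  simp only [Nat.mul_add]
  rw [Tdouble, Tdouble, Tdouble]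
  ring

lemma sum_id_aux (N : ℕ) : (∑ i ∈ range N, i) + N*(N+1) = T N + N*N := by
  apply two_cancel
  simp only [Nat.mul_add]
  rw [Tdouble, Nat.mul_comm 2 (∑ i ∈ range N, i), Finset.sum_range_id_mul_two]
  cases N with
  | zero => rfl
  | succ K => simp only [Nat.add_sub_cancel]; ring

lemma qb_map {S : Type*} [CommRing S] (f : R →+* S) (q : R) :
    ∀ M j, qb (f q) M j = f (qb q M j)
  | 0, 0 => by simp [qb]
  | 0, j+1 => by simp [qb]
  | M+1, 0 => by rw [qb_zero_right, qb_zero_right, map_one]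
  | M+1, j+1 => by
    rw [show qb (f q) (M+1) (j+1) = qb (f q) M (j+1) + (f q)^(M-j) * qb (f q) M j from rfl,
      show qb q (M+1) (j+1) = qb q M (j+1) + q^(M-j) * qb q M j from rfl,
      qb_map f q M (j+1), qb_map f q M j, map_add, map_mul, map_pow]

open Polynomial in
/-- The key polynomial identity: finite form of Jacobi's cube identity
(with `q^(T N + N*N)` still uncancelled). -/
lemma key (q : R) (N : ℕ) :
    q^(T N + N*N) * ((-1:R)^N * ∏ n ∈ range N, (1 - q^(n+1))^2)
      = q^(T N + N*N) * ((-1:R)^N *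
          ∑ i ∈ range (N+1), (-1:R)^i * ((2*i+1 : ℕ) : R) * qb q (2*N+1) (N+1+i) * q^(T i)) := by
  classical
  set DD := T N + N*N with hDD
  -- Gauss specialization
  have hGauss := gauss (Polynomial.C q) (Polynomial.C (q^N)) (Polynomial.X : R[X]) (2*N+1)
  -- factorization of the LHS product
  have hfact : ∏ m ∈ range (2*N+1), (Polynomial.C (q^N) + Polynomial.X * (Polynomial.C q)^m)
      = Polynomial.C (q^DD) * ((1+Polynomial.X) * ∏ n ∈ range N, ((Polynomial.C (q^(n+1)) + Polynomial.X) * (1 + Polynomial.X * Polynomial.C (q^(n+1))))) := by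
    rw [show 2*N+1 = N + (N+1) from by ring, prod_range_add]
    have h2 : ∏ i ∈ range (N+1), (Polynomial.C (q^N) + Polynomial.X * (Polynomial.C q)^(N+i))
        = (∏ i ∈ range N, (Polynomial.C (q^N) * (1 + Polynomial.X * Polynomial.C (q^(i+1))))) * (Polynomial.C (q^N) * (1+Polynomial.X)) := by
      rw [prod_range_succ' (fun i => (Polynomial.C (q^N) + Polynomial.X * (Polynomial.C q)^(N+i))) N]
      congr 1
      · apply prod_congr rfl; intro i _
        rw [← map_pow, show q^(N+(i+1)) = q^N * q^(i+1) from pow_add q N (i+1), map_mul]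
        ring
      · rw [← map_pow]; ring
    have h1 : ∏ m ∈ range N, (Polynomial.C (q^N) + Polynomial.X * (Polynomial.C q)^m)
        = Polynomial.C (q^(∑ m ∈ range N, m)) * ∏ n ∈ range N, (Polynomial.C (q^(n+1)) + Polynomial.X) := by
      have e : ∀ m ∈ range N, (Polynomial.C (q^N) + Polynomial.X * (Polynomial.C q)^m)
          = Polynomial.C (q^m) * (Polynomial.C (q^(N-m)) + Polynomial.X) := by
        intro m hm; rw [mem_range] at hm
        rw [← map_pow, show q^N = q^m * q^(N-m) from by rw [← pow_add]; congr 1; omega, map_mul]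
        ring
      rw [prod_congr rfl e, prod_mul_distrib, ← map_prod]
      have hrefl : ∏ m ∈ range N, (Polynomial.C (q^(N-m)) + Polynomial.X)
          = ∏ n ∈ range N, (Polynomial.C (q^(n+1)) + (Polynomial.X : R[X])) := by
        rw [← prod_range_reflect (fun n => (Polynomial.C (q^(n+1)) + (Polynomial.X : R[X]))) N]
        apply prod_congr rfl; intro m hm; rw [mem_range] at hm
        congr 3
        omega
      rw [hrefl]
      congr 2
      rw [prod_pow_eq_pow_sum]
    rw [h1, h2]
    rw [show (Polynomial.C (q^N) : R[X])*(1+Polynomial.X) = Polynomial.C (q^N) * (1+Polynomial.X) from rfl]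
    have hexp : q^(∑ m ∈ range N, m) * (q^N)^N * q^N = q^DD := by
      rw [← pow_mul, ← pow_add, ← pow_add]
      congr 1
      have h1 := sum_id_aux N
      have h2 : N*(N+1) = N*N + N := Nat.mul_succ N N
      omega
    have hc : (Polynomial.C (q^(∑ m ∈ range N, m)) : R[X]) * (∏ i ∈ range N, (Polynomial.C (q^N) * (1 + Polynomial.X * Polynomial.C (q^(i+1))))) * (Polynomial.C (q^N))
        = Polynomial.C (q^DD) * ∏ i ∈ range N, (1 + Polynomial.X * Polynomial.C (q^(i+1))) := by
      calc (Polynomial.C (q^(∑ m ∈ range N, m)) : R[X]) * (∏ i ∈ range N, (Polynomial.C (q^N) * (1 + Polynomial.X * Polynomial.C (q^(i+1))))) * (Polynomial.C (q^N))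
          = (Polynomial.C (q^(∑ m ∈ range N, m)) * (Polynomial.C (q^N))^N * Polynomial.C (q^N)) * ∏ i ∈ range N, (1 + Polynomial.X * Polynomial.C (q^(i+1))) := by
            rw [prod_mul_distrib, prod_const, card_range]; ring
        _ = Polynomial.C (q^DD) * ∏ i ∈ range N, (1 + Polynomial.X * Polynomial.C (q^(i+1))) := by
            rw [← map_pow, ← map_mul, ← map_mul, hexp]
    calc (Polynomial.C (q^(∑ m ∈ range N, m)) * ∏ n ∈ range N, (Polynomial.C (q^(n+1)) + Polynomial.X))
          * ((∏ i ∈ range N, (Polynomial.C (q^N) * (1 + Polynomial.X * Polynomial.C (q^(i+1))))) * (Polynomial.C (q^N) * (1+Polynomial.X)))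
        = (Polynomial.C (q^(∑ m ∈ range N, m)) * (∏ i ∈ range N, (Polynomial.C (q^N) * (1 + Polynomial.X * Polynomial.C (q^(i+1))))) * (Polynomial.C (q^N)))
          * ((1+Polynomial.X) * ∏ n ∈ range N, (Polynomial.C (q^(n+1)) + Polynomial.X)) := by ring
      _ = Polynomial.C (q^DD) * (∏ i ∈ range N, (1 + Polynomial.X * Polynomial.C (q^(i+1)))) * ((1+Polynomial.X) * ∏ n ∈ range N, (Polynomial.C (q^(n+1)) + Polynomial.X)) := by
          rw [hc]
      _ = _ := by rw [prod_mul_distrib]; ring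
  -- rewrite Gauss RHS into C(c_j) * X^j form
  have hbody : ∀ j ∈ range (2*N+1+1),
      qb (Polynomial.C q) (2*N+1) j * (Polynomial.C q)^(T (j-1)) * (Polynomial.X : R[X])^j * (Polynomial.C (q^N))^(2*N+1-j)
        = Polynomial.C (qb q (2*N+1) j * q^(T (j-1) + N*(2*N+1-j))) * Polynomial.X^j := by
    intro j _
    rw [qb_map (Polynomial.C : R →+* R[X]) q,
      show (Polynomial.C (q^N) : R[X]) = (Polynomial.C q)^N from map_pow _ q N,
      ← pow_mul, map_mul, map_pow, pow_add]
    ring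
  rw [sum_congr rfl hbody] at hGauss
  have hEq := hfact.symm.trans hGauss
  have hD := congrArg (fun p => Polynomial.eval (-1 : R) (Polynomial.derivative p)) hEq
  beta_reduce at hD
  -- evaluate LHS of hD
  rw [Polynomial.derivative_C_mul, Polynomial.eval_mul, Polynomial.eval_C] at hD
  rw [Polynomial.derivative_mul, Polynomial.eval_add, Polynomial.eval_mul, Polynomial.eval_mul] at hD
  rw [show Polynomial.derivative ((1:R[X]) + Polynomial.X) = 1 from by
    rw [Polynomial.derivative_add, Polynomial.derivative_one, Polynomial.derivative_X]; ring] at hD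
  rw [Polynomial.eval_one, Polynomial.eval_add, Polynomial.eval_one, Polynomial.eval_X] at hD
  rw [show (1:R) + (-1) = 0 from by ring] at hD
  rw [Polynomial.eval_prod] at hD
  have hprodeval : ∏ n ∈ range N,
      Polynomial.eval (-1:R) ((Polynomial.C (q^(n+1)) + Polynomial.X) * (1 + Polynomial.X * Polynomial.C (q^(n+1))))
        = (-1:R)^N * ∏ n ∈ range N, (1 - q^(n+1))^2 := by
    have e : ∀ n ∈ range N,
        Polynomial.eval (-1:R) ((Polynomial.C (q^(n+1)) + Polynomial.X) * (1 + Polynomial.X * Polynomial.C (q^(n+1))))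
          = (-1) * (1 - q^(n+1))^2 := by
      intro n _
      simp only [Polynomial.eval_mul, Polynomial.eval_add, Polynomial.eval_C,
        Polynomial.eval_X, Polynomial.eval_one]
      ring
    rw [prod_congr rfl e, prod_mul_distrib, prod_const, card_range]
  rw [hprodeval] at hD
  -- evaluate RHS of hD
  rw [Polynomial.derivative_sum, Polynomial.eval_finset_sum] at hD
  have hterm0 : ∀ j ∈ range (2*N+1+1),
      Polynomial.eval (-1:R) (Polynomial.derivative
          (Polynomial.C (qb q (2*N+1) j * q^(T (j-1) + N*(2*N+1-j))) * Polynomial.X^j))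
        = qb q (2*N+1) j * q^(T (j-1) + N*(2*N+1-j)) * ((j:R) * (-1:R)^(j-1)) := by
    intro j _
    rw [Polynomial.derivative_C_mul, Polynomial.derivative_X_pow, Polynomial.eval_mul,
      Polynomial.eval_C, Polynomial.eval_mul, Polynomial.eval_C, Polynomial.eval_pow,
      Polynomial.eval_X]
  rw [sum_congr rfl hterm0] at hD
  rw [show (2*N+1+1) = 2*N+2 from rfl] at hD
  set g : ℕ → R := fun j =>
    qb q (2*N+1) j * q^(T (j-1) + N*(2*N+1-j)) * ((j:R) * (-1:R)^(j-1)) with hg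
  have hD' : q^DD * ((-1:R)^N * ∏ n ∈ range N, (1 - q^(n+1))^2) = ∑ j ∈ range (2*N+2), g j := by
    rw [← hD]; ring
  rw [hD']
  -- split and pair the sum
  have hsplit : ∑ j ∈ range (2*N+2), g j = ∑ i ∈ range (N+1), (g (N+1+i) + g (N-i)) := by
    rw [show 2*N+2 = (N+1) + (N+1) from by ring, Finset.sum_range_add]
    have hrefl : ∑ j ∈ range (N+1), g j = ∑ i ∈ range (N+1), g (N-i) := by
      rw [← Finset.sum_range_reflect g (N+1)]
      apply sum_congr rfl; intro i _
      congr 1 <;> omega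
    rw [hrefl, ← sum_add_distrib]
    apply sum_congr rfl; intro i _
    exact add_comm _ _
  rw [hsplit]
  have hdist : q^DD * ((-1:R)^N *
        ∑ i ∈ range (N+1), (-1:R)^i * ((2*i+1:ℕ):R) * qb q (2*N+1) (N+1+i) * q^(T i))
      = ∑ i ∈ range (N+1), q^DD * ((-1:R)^N *
        ((-1:R)^i * ((2*i+1:ℕ):R) * qb q (2*N+1) (N+1+i) * q^(T i))) := by
    rw [Finset.mul_sum, Finset.mul_sum]
  rw [hdist]
  apply sum_congr rfl
  intro i hi
  rw [mem_range] at hi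
  have hiN : i ≤ N := by omega
  -- compute g (N+1+i)
  have eexp1 : T ((N+1+i)-1) + N*(2*N+1-(N+1+i)) = DD + T i := by
    obtain ⟨d, rfl⟩ : ∃ d, N = i + d := ⟨N - i, by omega⟩
    rw [hDD, show (i+d+1+i)-1 = 2*i+d from by omega, show 2*(i+d)+1-((i+d)+1+i) = d from by omega]
    exact E1 i d
  have hg1 : g (N+1+i) = qb q (2*N+1) (N+1+i) * q^(DD + T i) * (((N+1+i:ℕ):R) * (-1:R)^(N+i)) := by
    rw [hg]
    simp only []
    rw [eexp1, show (N+1+i)-1 = N+i from by omega]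
  rcases Nat.eq_or_lt_of_le hiN with hiN' | hiN'
  · -- i = N : second term is g 0 = 0
    subst hiN'
    have hg0 : g (i - i) = 0 := by
      rw [hg, show i - i = 0 from by omega]
      simp
    rw [hg0, hg1, add_zero]
    rw [pow_add (-1:R) i i, show ((2*i+1 : ℕ):R) = ((i+1+i : ℕ):R) from by push_cast; ring,
      pow_add q DD (T i)]
    ring
  · -- i < N
    have eexp2 : T ((N-i)-1) + N*(2*N+1-(N-i)) = DD + T i := by
      obtain ⟨e, rfl⟩ : ∃ e, N = i + e + 1 := ⟨N - i - 1, by omega⟩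
      rw [hDD, show ((i+e+1)-i)-1 = e from by omega,
        show 2*(i+e+1)+1-((i+e+1)-i) = (i+e+1)+((i+e+1)+1+i) - (i+e+1) from by omega,
        show (i+e+1)+((i+e+1)+1+i) - (i+e+1) = (i+e+1)+1+i from by omega]
      exact E2 i e
    have hsign2 : (-1:R)^((N-i)-1) = (-1:R)^(N+i+1) := by
      obtain ⟨e, rfl⟩ : ∃ e, N = i + e + 1 := ⟨N - i - 1, by omega⟩
      rw [show ((i+e+1)-i)-1 = e from by omega, show (i+e+1)+i+1 = 2*(i+1)+e from by omega,
        pow_add, pow_mul, neg_one_sq, one_pow, one_mul]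
    have hqsym : qb q (2*N+1) (N-i) = qb q (2*N+1) (N+1+i) := by
      rw [qb_symm q (2*N+1) (N-i) (by omega)]
      congr 1
      omega
    have hg2 : g (N-i) = qb q (2*N+1) (N+1+i) * q^(DD + T i) * (((N-i:ℕ):R) * (-1:R)^(N+i+1)) := by
      rw [hg]
      simp only []
      rw [eexp2, hsign2, hqsym]
    rw [hg1, hg2]
    have hcast : ((N-i : ℕ) : R) = (N:R) - (i:R) := by
      rw [Nat.cast_sub (by omega)]
    rw [hcast, pow_add q DD (T i), pow_succ (-1:R) (N+i), pow_add (-1:R) N i]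
    push_cast
    ring
end KEY
section JAC
open PowerSeries

lemma key2 {R : Type*} [CommRing R] [IsDomain R] (q : R) (hq : q ≠ 0) (N : ℕ) :
    ∏ n ∈ range N, (1 - q^(n+1))^2
      = ∑ i ∈ range (N+1), (-1:R)^i * ((2*i+1 : ℕ) : R) * qb q (2*N+1) (N+1+i) * q^(T i) := by
  have hkey := key q N
  have h1 := mul_left_cancel₀ (pow_ne_zero (T N + N*N) hq) hkey
  exact mul_left_cancel₀ (pow_ne_zero N (neg_ne_zero.mpr (one_ne_zero))) h1

lemma qb_prod_congr {R : Type*} [CommRing R] (q : R) (N i : ℕ) (hi : i ≤ N) :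
    ∃ w : R, qb q (2*N+1) (N+1+i) * ∏ n ∈ range N, (1 - q^(n+1))
      = 1 + q^(N-i+1) * w := by
  have hsplit : ∏ n ∈ range N, (1 - q^(n+1))
      = (∏ n ∈ range (N-i), (1 - q^(n+1))) * ∏ k ∈ range i, (1 - q^((N-i)+k+1)) := by
    rw [← prod_range_add (fun n => 1 - q^(n+1)) (N-i) i, show (N-i) + i = N from by omega]
  have hqb : qb q (2*N+1) (N+1+i) * ∏ n ∈ range (N-i), (1 - q^(n+1))
      = ∏ n ∈ range (N-i), (1 - q^((N+1+i)+1+n)) := by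
    have := qbmul q (2*N+1) (N+1+i) (by omega)
    rwa [show 2*N+1-(N+1+i) = N-i from by omega] at this
  obtain ⟨w1, hw1⟩ := prod_one_sub_pow_congr q (range (N-i)) (fun n => (N+1+i)+1+n) (N-i+1)
    (fun n _ => by show N-i+1 ≤ (N+1+i)+1+n; omega)
  obtain ⟨w2, hw2⟩ := prod_one_sub_pow_congr q (range i) (fun k => (N-i)+k+1) (N-i+1)
    (fun k _ => by show N-i+1 ≤ (N-i)+k+1; omega)
  refine ⟨w1 + w2 + q^(N-i+1) * (w1 * w2), ?_⟩
  rw [hsplit, ← mul_assoc, hqb, hw1, hw2]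
  ring

lemma jacobiCoeff (a N m : ℕ) (ha : 0 < a) (hm : m ≤ a*N) :
    (PowerSeries.coeff m) (∏ n ∈ range N, (1 - (X : ℤ⟦X⟧)^(a*(n+1)))^3)
      = ∑ i ∈ range (N+1), (if a * T i = m then (-1:ℤ)^i * (2*i+1) else 0) := by
  set q : ℤ⟦X⟧ := X^a with hqdef
  have hq0 : q ≠ 0 := pow_ne_zero a X_ne_zero
  have hqpow : ∀ e : ℕ, q^e = (X : ℤ⟦X⟧)^(a*e) := fun e => by rw [hqdef, ← pow_mul]
  have hJ := key2 q hq0 N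
  have hcube : ∏ n ∈ range N, (1 - (X : ℤ⟦X⟧)^(a*(n+1)))^3
      = (∏ n ∈ range N, (1 - q^(n+1))^2) * ∏ n ∈ range N, (1 - q^(n+1)) := by
    rw [← prod_mul_distrib]
    apply prod_congr rfl; intro n _
    rw [hqpow (n+1)]; ring
  rw [hcube, hJ, sum_mul]
  have hwex : ∀ i, ∃ w : ℤ⟦X⟧, i ≤ N →
      qb q (2*N+1) (N+1+i) * ∏ n ∈ range N, (1 - q^(n+1)) = 1 + q^(N-i+1) * w := by
    intro i
    by_cases h : i ≤ N
    · exact (qb_prod_congr q N i h).imp (fun w hw => fun _ => hw)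
    · exact ⟨0, fun h' => absurd h' h⟩
  choose W hW using hwex
  have hterm : ∀ i ∈ range (N+1),
      (-1:ℤ⟦X⟧)^i * ((2*i+1 : ℕ) : ℤ⟦X⟧) * qb q (2*N+1) (N+1+i) * q^(T i)
          * ∏ n ∈ range N, (1 - q^(n+1))
        = PowerSeries.C ((-1:ℤ)^i * (2*i+1))
            * ((X:ℤ⟦X⟧)^(a * T i) + (X:ℤ⟦X⟧)^(a*T i + a*(N-i+1)) * W i) := by
    intro i hi
    rw [mem_range] at hi
    have hw := hW i (by omega)
    have hC : (-1:ℤ⟦X⟧)^i * ((2*i+1 : ℕ) : ℤ⟦X⟧) = PowerSeries.C ((-1:ℤ)^i * (2*i+1)) := by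
      rw [map_mul, map_pow]
      simp
    calc (-1:ℤ⟦X⟧)^i * ((2*i+1 : ℕ) : ℤ⟦X⟧) * qb q (2*N+1) (N+1+i) * q^(T i)
          * ∏ n ∈ range N, (1 - q^(n+1))
        = ((-1:ℤ⟦X⟧)^i * ((2*i+1 : ℕ) : ℤ⟦X⟧)) * (q^(T i) *
            (qb q (2*N+1) (N+1+i) * ∏ n ∈ range N, (1 - q^(n+1)))) := by ring
      _ = PowerSeries.C ((-1:ℤ)^i * (2*i+1)) * (q^(T i) * (1 + q^(N-i+1) * W i)) := by
          rw [hC, hw]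
      _ = _ := by
          rw [hqpow (T i), hqpow (N-i+1)]
          ring
  rw [sum_congr rfl hterm, map_sum]
  apply sum_congr rfl
  intro i hi
  rw [mem_range] at hi
  rw [PowerSeries.coeff_C_mul, map_add, PowerSeries.coeff_X_pow]
  have hlt : m < a*T i + a*(N-i+1) := by
    have hNB : N < T i + (N-i+1) := by have := T_ge i; omega
    calc m ≤ a*N := hm
      _ < a*(T i + (N-i+1)) := (Nat.mul_lt_mul_left ha).mpr hNB
      _ = a*T i + a*(N-i+1) := Nat.mul_add a _ _
  have hzero : (PowerSeries.coeff m) ((X:ℤ⟦X⟧)^(a*T i + a*(N-i+1)) * W i) = 0 :=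
    PowerSeries.X_pow_dvd_iff.mp ⟨W i, rfl⟩ m hlt
  rw [hzero, add_zero]
  by_cases h : m = a * T i
  · rw [if_pos h, if_pos h.symm, mul_one]
  · rw [if_neg h, if_neg (fun hh => h hh.symm), mul_zero]

end JAC


section EULER
open PowerSeries

/-- The infinite product `∏_{n=1}^∞ (1 − t^{an})^e` as a formal power series in `ℤ[[t]]`
(with `a ≥ 1`): since the factor `1 − t^{a(n+1)}` is `≡ 1 mod t^{k+1}` once `n > k`, the
`k`-th coefficient of the partial products stabilizes, and we take the stabilized value
`coeff k (∏_{n=0}^{k} (1 − t^{a(n+1)})^e)`. -/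
noncomputable def eulerProd (a e : ℕ) : ℤ⟦X⟧ :=
  PowerSeries.mk fun k =>
    PowerSeries.coeff k (∏ n ∈ Finset.range (k + 1), (1 - (PowerSeries.X : ℤ⟦X⟧) ^ (a * (n + 1))) ^ e)

/-- `F(t) = (∏_{n=1}^∞(1 − tⁿ)³ + 3t·∏_{n=1}^∞(1 − t^{9n})³) · (∏_{n=1}^∞(1 − t^{3n})⁹)⁻¹`,
where the inverse exists since `∏_{n=1}^∞(1 − t^{3n})⁹` has constant term `1`. -/
noncomputable def F : ℤ⟦X⟧ :=
  (eulerProd 1 3 + 3 * PowerSeries.X * eulerProd 9 3) * PowerSeries.invOfUnit (eulerProd 3 9) 1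

lemma oneAdd_mul {R : Type*} [CommRing R] (q : R) (c : ℕ) {x y : R}
    (hx : ∃ w, x = 1 + q^c * w) (hy : ∃ w, y = 1 + q^c * w) :
    ∃ w, x * y = 1 + q^c * w := by
  obtain ⟨w1, rfl⟩ := hx; obtain ⟨w2, rfl⟩ := hy
  exact ⟨w1 + w2 + q^c * (w1 * w2), by ring⟩

lemma oneAdd_pow {R : Type*} [CommRing R] (q : R) (c : ℕ) {x : R}
    (hx : ∃ w, x = 1 + q^c * w) : ∀ e : ℕ, ∃ w, x^e = 1 + q^c * w
  | 0 => ⟨0, by simp⟩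
  | e+1 => by
    rw [pow_succ]
    exact oneAdd_mul q c (oneAdd_pow q c hx e) hx

lemma oneAdd_prod {R : Type*} [CommRing R] (q : R) (c : ℕ) {ι : Type*} (S : Finset ι)
    (g : ι → R) (h : ∀ m ∈ S, ∃ w, g m = 1 + q^c * w) :
    ∃ w, ∏ m ∈ S, g m = 1 + q^c * w := by
  refine Finset.prod_induction g (fun x => ∃ w, x = 1 + q^c * w)
    (fun _ _ => oneAdd_mul q c) ⟨0, by simp⟩ h

/-- stability of coefficients of the partial Euler products -/
lemma euler_stable (a e k M₁ M₂ : ℕ) (ha : 0 < a) (hk : k < M₁) (hM : M₁ ≤ M₂) :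
    PowerSeries.coeff k (∏ n ∈ range M₂, (1 - (X : ℤ⟦X⟧)^(a*(n+1)))^e)
      = PowerSeries.coeff k (∏ n ∈ range M₁, (1 - (X : ℤ⟦X⟧)^(a*(n+1)))^e) := by
  obtain ⟨d, rfl⟩ : ∃ d, M₂ = M₁ + d := ⟨M₂ - M₁, by omega⟩
  rw [prod_range_add]
  obtain ⟨w, hw⟩ : ∃ w, ∏ i ∈ range d, (1 - (X : ℤ⟦X⟧)^(a*(M₁+i+1)))^e = 1 + X^(k+1) * w := by
    apply oneAdd_prod
    intro m _
    apply oneAdd_pow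
    refine ⟨-(X^(a*(M₁+m+1) - (k+1))), ?_⟩
    rw [mul_neg, ← pow_add]
    rw [show k+1 + (a*(M₁+m+1) - (k+1)) = a*(M₁+m+1) from by
      have : M₁ + m + 1 ≤ a*(M₁+m+1) := Nat.le_mul_of_pos_left _ ha
      omega]
    ring
  rw [hw, mul_add, mul_one, map_add]
  have : (PowerSeries.coeff k) ((∏ n ∈ range M₁, (1 - (X:ℤ⟦X⟧)^(a*(n+1)))^e) * (X^(k+1) * w)) = 0 := by
    rw [show (∏ n ∈ range M₁, (1 - (X:ℤ⟦X⟧)^(a*(n+1)))^e) * (X^(k+1) * w)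
        = X^(k+1) * ((∏ n ∈ range M₁, (1 - (X:ℤ⟦X⟧)^(a*(n+1)))^e) * w) from by ring]
    exact PowerSeries.X_pow_dvd_iff.mp ⟨_, rfl⟩ k (by omega)
  rw [this, add_zero]

lemma euler_coeff (a e k M : ℕ) (ha : 0 < a) (hM : k < M) :
    PowerSeries.coeff k (eulerProd a e)
      = PowerSeries.coeff k (∏ n ∈ range M, (1 - (X : ℤ⟦X⟧)^(a*(n+1)))^e) := by
  rw [eulerProd, PowerSeries.coeff_mk]
  rcases le_or_gt M (k+1) with h | h
  · rw [euler_stable a e k M (k+1) ha hM h]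
  · rw [euler_stable a e k (k+1) M ha (by omega) (by omega)]

/-- `eulerProd 3 9` is supported on multiples of 3. -/
lemma eulerProd39_coeff (j : ℕ) (hj : ¬ (3 ∣ j)) :
    PowerSeries.coeff j (eulerProd 3 9) = 0 := by
  rw [eulerProd, PowerSeries.coeff_mk]
  have hQ : ∀ i, ¬(3∣i) →
      PowerSeries.coeff i (∏ n ∈ range (j+1), (1 - (X:ℤ⟦X⟧)^(3*(n+1)))^9) = 0 := by
    have hmul : ∀ x y : ℤ⟦X⟧, (∀ i, ¬(3∣i) → PowerSeries.coeff i x = 0) →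
        (∀ i, ¬(3∣i) → PowerSeries.coeff i y = 0) →
        (∀ i, ¬(3∣i) → PowerSeries.coeff i (x*y) = 0) := by
      intro x y hx hy i hi
      rw [PowerSeries.coeff_mul]
      apply Finset.sum_eq_zero
      intro p hp
      rw [Finset.HasAntidiagonal.mem_antidiagonal] at hp
      rcases (by omega : ¬(3 ∣ p.1) ∨ ¬(3 ∣ p.2)) with h | h
      · rw [hx p.1 h, zero_mul]
      · rw [hy p.2 h, mul_zero]
    have hone : ∀ i, ¬(3∣i) → PowerSeries.coeff i (1 : ℤ⟦X⟧) = 0 := by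
      intro i hi
      rw [PowerSeries.coeff_one, if_neg (by omega)]
    apply Finset.prod_induction _ (fun f => ∀ i, ¬(3∣i) → PowerSeries.coeff i f = 0) hmul hone
    intro n _
    -- (1 - X^(3*(n+1)))^9
    have hbase : ∀ i, ¬(3∣i) → PowerSeries.coeff i (1 - (X:ℤ⟦X⟧)^(3*(n+1))) = 0 := by
      intro i hi
      rw [map_sub, PowerSeries.coeff_one, PowerSeries.coeff_X_pow,
        if_neg (by omega), if_neg (by omega)]
      ring
    have hpow : ∀ e : ℕ, ∀ i, ¬(3∣i) →
        PowerSeries.coeff i ((1 - (X:ℤ⟦X⟧)^(3*(n+1)))^e) = 0 := by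
      intro e
      induction e with
      | zero => simpa using hone
      | succ e ih =>
        rw [pow_succ]
        exact hmul _ _ ih hbase
    exact hpow 9
  exact hQ j hj

end EULER

section MAIN
open PowerSeries

lemma numerator_coeff (m : ℕ) (hm : ¬ (3 ∣ m)) :
    PowerSeries.coeff m (eulerProd 1 3 + 3 * PowerSeries.X * eulerProd 9 3) = 0 := by
  obtain ⟨m', rfl⟩ : ∃ m', m = m' + 1 := ⟨m - 1, by omega⟩
  rw [map_add]
  have h13 : PowerSeries.coeff (m'+1) (eulerProd 1 3)
      = ∑ i ∈ range (m'+3), (if 1 * T i = m'+1 then (-1:ℤ)^i * (2*i+1) else 0) := by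
    rw [euler_coeff 1 3 (m'+1) (m'+2) one_pos (by omega),
      jacobiCoeff 1 (m'+2) (m'+1) one_pos (by omega)]
  have h93 : PowerSeries.coeff (m'+1) (3 * PowerSeries.X * eulerProd 9 3)
      = 3 * ∑ i ∈ range (m'+2), (if 9 * T i = m' then (-1:ℤ)^i * (2*i+1) else 0) := by
    rw [show (3 : ℤ⟦X⟧) * PowerSeries.X * eulerProd 9 3
        = PowerSeries.C 3 * (PowerSeries.X * eulerProd 9 3) from by
      rw [show (PowerSeries.C (R := ℤ)) 3 = 3 from by simp]; ring]
    rw [PowerSeries.coeff_C_mul, PowerSeries.coeff_succ_X_mul,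
      euler_coeff 9 3 m' (m'+1) (by norm_num) (by omega),
      jacobiCoeff 9 (m'+1) m' (by norm_num) (by omega)]
  rw [h13, h93]
  by_cases hcase : ∃ s, T (3*s+1) = m'+1
  · obtain ⟨s, hs⟩ := hcase
    have hS1 : ∑ i ∈ range (m'+3), (if 1 * T i = m'+1 then (-1:ℤ)^i * (2*i+1) else 0)
        = (-1:ℤ)^(s+1) * (2*(3*s+1)+1) := by
      rw [Finset.sum_eq_single (3*s+1)]
      · have hsgn : (-1:ℤ)^(3*s+1) = (-1:ℤ)^(s+1) := by
          rw [show 3*s+1 = 2*s + (s+1) from by ring, pow_add, pow_mul, neg_one_sq, one_pow,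
            one_mul]
        rw [if_pos (by rw [one_mul, hs]), hsgn]
        push_cast; ring
      · intro i _ hne
        rw [if_neg]
        rw [one_mul]
        intro hTi
        exact hne (T_inj (hTi.trans hs.symm))
      · intro habs
        exfalso; apply habs; rw [mem_range]
        have := T_ge (3*s+1); omega
    have hm'9 : 9 * T s = m' := by have := T_3s1 s; omega
    have hS2 : ∑ i ∈ range (m'+2), (if 9 * T i = m' then (-1:ℤ)^i * (2*i+1) else 0)
        = (-1:ℤ)^s * (2*s+1) := by
      rw [Finset.sum_eq_single s]
      · rw [if_pos hm'9]
      · intro i _ hne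
        rw [if_neg]
        intro h9
        exact hne (T_inj (by omega))
      · intro habs
        exfalso; apply habs; rw [mem_range]
        have := T_ge s; omega
    rw [hS1, hS2, pow_succ]
    push_cast
    ring
  · have hS1 : ∑ i ∈ range (m'+3), (if 1 * T i = m'+1 then (-1:ℤ)^i * (2*i+1) else 0) = 0 := by
      apply Finset.sum_eq_zero
      intro i _
      rw [if_neg]
      rw [one_mul]
      intro hTi
      have h3 : i % 3 = 0 ∨ i % 3 = 1 ∨ i % 3 = 2 := by omega
      rcases h3 with h | h | h
      · obtain ⟨s, rfl⟩ : ∃ s, i = 3*s := ⟨i/3, by omega⟩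
        exact hm (by rw [← hTi]; exact ⟨T s + s*s, T_3s s⟩)
      · obtain ⟨s, rfl⟩ : ∃ s, i = 3*s+1 := ⟨i/3, by omega⟩
        exact hcase ⟨s, hTi⟩
      · obtain ⟨s, rfl⟩ : ∃ s, i = 3*s+2 := ⟨i/3, by omega⟩
        exact hm (by rw [← hTi]; exact ⟨T s + (s+1)*(s+1), T_3s2 s⟩)
    have hS2 : ∑ i ∈ range (m'+2), (if 9 * T i = m' then (-1:ℤ)^i * (2*i+1) else 0) = 0 := by
      apply Finset.sum_eq_zero
      intro i _
      rw [if_neg]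
      intro h9
      exact hcase ⟨i, by have := T_3s1 i; omega⟩
    rw [hS1, hS2]
    ring

lemma eulerProd39_const : PowerSeries.constantCoeff (eulerProd 3 9) = 1 := by
  rw [← PowerSeries.coeff_zero_eq_constantCoeff_apply, eulerProd, PowerSeries.coeff_mk,
    PowerSeries.coeff_zero_eq_constantCoeff_apply, map_prod]
  apply Finset.prod_eq_one
  intro n _
  rw [map_pow, map_sub, map_one, map_pow, PowerSeries.constantCoeff_X]
  norm_num

/-- The coefficient of `t^k` in `F` vanishes for every `k` not divisible by `3`. -/
theorem coeff_F_eq_zero_of_not_dvd (k : ℕ) (hk : ¬ (3 ∣ k)) :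
    PowerSeries.coeff k F = 0 := by
  revert hk
  induction k using Nat.strong_induction_on with
  | _ k IH =>
  intro hk
  have hB1 : PowerSeries.constantCoeff (eulerProd 3 9) = ((1 : ℤˣ) : ℤ) := by
    rw [eulerProd39_const]; simp
  have hFB : F * eulerProd 3 9 = eulerProd 1 3 + 3 * PowerSeries.X * eulerProd 9 3 := by
    rw [F, mul_assoc, mul_comm (PowerSeries.invOfUnit (eulerProd 3 9) 1),
      PowerSeries.mul_invOfUnit _ _ hB1, mul_one]
  have h0 : PowerSeries.coeff k (F * eulerProd 3 9) = 0 := by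
    rw [hFB]; exact numerator_coeff k hk
  rw [PowerSeries.coeff_mul, Finset.sum_eq_single (k, 0)] at h0
  · rwa [PowerSeries.coeff_zero_eq_constantCoeff_apply, eulerProd39_const, mul_one] at h0
  · intro p hp hne
    rw [Finset.HasAntidiagonal.mem_antidiagonal] at hp
    by_cases h2 : 3 ∣ p.2
    · have hp2 : p.2 ≠ 0 := by
        intro h0'
        apply hne
        have h1' : p.1 = k := by omega
        exact Prod.ext h1' h0'
      have hnd : ¬ 3 ∣ p.1 := by omega
      rw [IH p.1 (by omega) hnd, zero_mul]
    · rw [eulerProd39_coeff p.2 h2, mul_zero]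
  · intro habs
    exact absurd (Finset.HasAntidiagonal.mem_antidiagonal.mpr (by simp)) habs

end MAIN
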